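/- Let f be a continuous map on the closed unit disk whose restriction to the open disk D satisfies the AS condition with a modulus δ = δ(ε,t) valid for points in D. Then for all x, a, b on the unit circle S¹ contained in a ball of radius δ(ε,t) with |x−a|/|x−b| ≤ t, one has |f(x)−f(a)|/|f(x)−f(b)| ≤ (1+ε)t, provided f is injective on the closed disk. -/
import Mathlib


open Filter Topology Metric

/-- If a continuous map on the closed unit disk, injective there,
satisfies the AS condition on the open disk with modulus δ(ε,t), then the same
AS inequality holds (with the same modulus) for points on the unit circle. -/
theorem as_boundary_extension (f : ℂ → ℂ)
    (hf_cont : ContinuousOn f (closedBall (0:ℂ) 1))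
    (hf_inj : Set.InjOn f (closedBall (0:ℂ) 1))
    (δ : ℝ → ℝ → ℝ)
    (hδpos : ∀ ε > (0:ℝ), ∀ t > (0:ℝ), 0 < δ ε t)
    (hAS : ∀ ε > (0:ℝ), ∀ t > (0:ℝ),
      ∀ x ∈ ball (0:ℂ) 1, ∀ a ∈ ball (0:ℂ) 1, ∀ b ∈ ball (0:ℂ) 1,
        x ≠ a → x ≠ b → a ≠ b →
        (∃ c : ℂ, x ∈ ball c (δ ε t) ∧ a ∈ ball c (δ ε t) ∧ b ∈ ball c (δ ε t)) →
        dist x a / dist x b ≤ t →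
        dist (f x) (f a) / dist (f x) (f b) ≤ (1 + ε) * t) :
    ∀ ε > (0:ℝ), ∀ t > (0:ℝ),
      ∀ x ∈ sphere (0:ℂ) 1, ∀ a ∈ sphere (0:ℂ) 1, ∀ b ∈ sphere (0:ℂ) 1,
        x ≠ a → x ≠ b → a ≠ b →
        (∃ c : ℂ, x ∈ ball c (δ ε t) ∧ a ∈ ball c (δ ε t) ∧ b ∈ ball c (δ ε t)) →
        dist x a / dist x b ≤ t →
        dist (f x) (f a) / dist (f x) (f b) ≤ (1 + ε) * t := by
  intro ε hε t ht x hx a ha b hb hxa hxb hab hball hrat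
  obtain ⟨c, hxc, hac, hbc⟩ := hball
  have hxc' : x ∈ closedBall (0:ℂ) 1 := sphere_subset_closedBall hx
  have hac' : a ∈ closedBall (0:ℂ) 1 := sphere_subset_closedBall ha
  have hbc' : b ∈ closedBall (0:ℂ) 1 := sphere_subset_closedBall hb
  have hnx : ‖x‖ = 1 := by simpa using hx
  have hna : ‖a‖ = 1 := by simpa using ha
  have hnb : ‖b‖ = 1 := by simpa using hb
  -- the filter r → 1⁻, with r ∈ Ioo 0 1 eventually
  have hIoo : Set.Ioo (0:ℝ) 1 ∈ 𝓝[<] (1:ℝ) := Ioo_mem_nhdsLT_of_mem (by norm_num)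
  -- tendsto of r ↦ (r:ℂ) * z to z within the closed ball (for unit z)
  have key : ∀ z : ℂ, ‖z‖ = 1 →
      Tendsto (fun r : ℝ => (r : ℂ) * z) (𝓝[<] (1:ℝ)) (𝓝[closedBall (0:ℂ) 1] z) := by
    intro z hz
    apply tendsto_nhdsWithin_of_tendsto_nhds_of_eventually_within
    · have : Continuous (fun r : ℝ => (r : ℂ) * z) := by continuity
      have h1 : Tendsto (fun r : ℝ => (r : ℂ) * z) (𝓝 1) (𝓝 z) := by
        simpa using this.tendsto 1
      exact h1.mono_left nhdsWithin_le_nhds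
    · filter_upwards [hIoo] with r hr
      simp only [mem_closedBall, dist_zero_right, norm_mul, Complex.norm_real, hz, mul_one,
        Real.norm_eq_abs, abs_of_pos hr.1]
      exact hr.2.le
  have hfx := (hf_cont x hxc').tendsto.comp (key x hnx)
  have hfa := (hf_cont a hac').tendsto.comp (key a hna)
  have hfb := (hf_cont b hbc').tendsto.comp (key b hnb)
  have hden : dist (f x) (f b) ≠ 0 := by
    rw [dist_ne_zero]
    exact fun h => hxb (hf_inj hxc' hbc' h)
  have hlim : Tendsto
      (fun r : ℝ => dist (f ((r:ℂ)*x)) (f ((r:ℂ)*a)) / dist (f ((r:ℂ)*x)) (f ((r:ℂ)*b)))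
      (𝓝[<] (1:ℝ)) (𝓝 (dist (f x) (f a) / dist (f x) (f b))) :=
    ((hfx.dist hfa).div (hfx.dist hfb) hden)
  refine le_of_tendsto hlim ?_
  filter_upwards [hIoo] with r hr
  have hr0 : (0:ℝ) < r := hr.1
  have hr1 : r < 1 := hr.2
  have hrC : (r:ℂ) ≠ 0 := by exact_mod_cast hr0.ne'
  have hmem : ∀ z : ℂ, ‖z‖ = 1 → (r:ℂ) * z ∈ ball (0:ℂ) 1 := by
    intro z hz
    simp only [mem_ball, dist_zero_right, norm_mul, Complex.norm_real, hz, mul_one,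
      Real.norm_eq_abs, abs_of_pos hr0]
    exact hr1
  have hd : ∀ u v : ℂ, dist ((r:ℂ)*u) ((r:ℂ)*v) = r * dist u v := by
    intro u v
    rw [dist_eq_norm, dist_eq_norm, ← mul_sub, norm_mul, Complex.norm_real,
      Real.norm_eq_abs, abs_of_pos hr0]
  have hballc : ∀ z : ℂ, z ∈ ball c (δ ε t) → (r:ℂ)*z ∈ ball ((r:ℂ)*c) (δ ε t) := by
    intro z hz
    rw [mem_ball, hd]
    calc r * dist z c ≤ 1 * dist z c := by
          apply mul_le_mul_of_nonneg_right hr1.le dist_nonneg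
      _ = dist z c := one_mul _
      _ < δ ε t := mem_ball.mp hz
  have hratio : dist ((r:ℂ)*x) ((r:ℂ)*a) / dist ((r:ℂ)*x) ((r:ℂ)*b) ≤ t := by
    rw [hd, hd, mul_div_mul_left _ _ hr0.ne']
    exact hrat
  exact hAS ε hε t ht _ (hmem x hnx) _ (hmem a hna) _ (hmem b hnb)
    (fun h => hxa (mul_left_cancel₀ hrC h))
    (fun h => hxb (mul_left_cancel₀ hrC h))
    (fun h => hab (mul_left_cancel₀ hrC h))
    ⟨(r:ℂ)*c, hballc x hxc, hballc a hac, hballc b hbc⟩ hratio
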